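/- For ε ∈ (0, 1/2) and T(φ) = min(max(φ, ε), 1−ε), and any two reals a ≠ b, the divided-difference quantity −(H_ε'(1−b) − H_ε'(1−a))/(G_ε'(b) − G_ε'(a)) is well defined (the denominator is nonzero) and lies in the interval [ε, 1−ε], where H_ε'' = 1/T and G_ε' (φ) = H_ε'(φ) − H_ε'(1−φ). -/

import Mathlib

private lemma Tcomp (ε s : ℝ) (h : ε ≤ 1 - ε) :
    min (max (1 - s) ε) (1 - ε) = 1 - min (max s ε) (1 - ε) := by
  rcases le_total s ε with h1 | h1 <;> rcases le_total s (1 - ε) with h2 | h2 <;>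
    simp [max_def, min_def] <;> split_ifs <;> linarith

private lemma aux_main (ε : ℝ) (hε0 : 0 < ε) (hε1 : ε < 1/2)
    (H' : ℝ → ℝ)
    (hH' : ∀ s : ℝ, HasDerivAt H' (1 / min (max s ε) (1 - ε)) s)
    (a b : ℝ) (hlt : a < b) :
    (H' b - H' (1 - b)) - (H' a - H' (1 - a)) ≠ 0 ∧
      ε ≤ -((H' (1 - b) - H' (1 - a)) / ((H' b - H' (1 - b)) - (H' a - H' (1 - a)))) ∧
      -((H' (1 - b) - H' (1 - a)) / ((H' b - H' (1 - b)) - (H' a - H' (1 - a)))) ≤ 1 - ε := by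
  have hεle : ε ≤ 1 - ε := by linarith
  set T : ℝ → ℝ := fun s => min (max s ε) (1 - ε) with hTdef
  have hTε : ∀ s, ε ≤ T s := fun s => le_min (le_max_right _ _) hεle
  have hTub : ∀ s, T s ≤ 1 - ε := fun s => min_le_right _ _
  have hTpos : ∀ s, 0 < T s := fun s => lt_of_lt_of_le hε0 (hTε s)
  have hT1 : ∀ s, 0 < 1 - T s := fun s => by have := hTub s; linarith
  have hTcomp : ∀ s, T (1 - s) = 1 - T s := fun s => Tcomp ε s hεle
  have h1s : ∀ s : ℝ, HasDerivAt (fun s : ℝ => 1 - s) (-1) s := fun s => by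
    exact (hasDerivAt_id' s).const_sub 1
  have hK : ∀ s : ℝ, HasDerivAt (fun s => H' (1 - s)) (-(1 / T (1 - s))) s := fun s => by
    have := (hH' (1 - s)).comp s (h1s s)
    exact this.congr_deriv (by rw [mul_neg_one])
  have hG : ∀ s : ℝ, HasDerivAt (fun s => H' s - H' (1 - s)) (1 / (T s * (1 - T s))) s := by
    intro s
    have := (hH' s).sub (hK s)
    have hsum : 1 / T s - -(1 / T (1 - s)) = 1 / (T s * (1 - T s)) := by
      rw [hTcomp s]
      have h1 : T s ≠ 0 := (hTpos s).ne'
      have h2 : (1 : ℝ) - T s ≠ 0 := (hT1 s).ne'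
      field_simp
      ring
    rwa [hsum] at this
  -- strict monotonicity of G'
  have hGmono : StrictMono (fun s => H' s - H' (1 - s)) :=
    strictMono_of_hasDerivAt_pos hG fun s =>
      one_div_pos.mpr (mul_pos (hTpos s) (hT1 s))
  have hD : 0 < (H' b - H' (1 - b)) - (H' a - H' (1 - a)) := sub_pos.mpr (hGmono hlt)
  -- F1 s = -H'(1-s) - ε * G' s is monotone
  have hF1 : Monotone (fun s => -H' (1 - s) - ε * (H' s - H' (1 - s))) := by
    apply monotone_of_hasDerivAt_nonneg
      (f' := fun s => 1 / T (1 - s) - ε * (1 / (T s * (1 - T s))))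
    · intro s
      have := ((hK s).neg).sub ((hG s).const_mul ε)
      exact this.congr_deriv (by ring)
    · intro s
      have h1 := hTpos s; have h2 := hT1 s; have h3 := hTε s
      simp only [hTcomp s, Pi.zero_apply]
      rw [sub_nonneg]
      rw [show ε * (1 / (T s * (1 - T s))) = ε / (T s * (1 - T s)) by ring,
        show 1 / (1 - T s) = T s / (T s * (1 - T s)) by field_simp]
      exact div_le_div_of_nonneg_right h3 (mul_pos h1 h2).le
  -- F2 s = (1-ε) * G' s + H'(1-s) is monotone
  have hF2 : Monotone (fun s => (1 - ε) * (H' s - H' (1 - s)) + H' (1 - s)) := by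
    apply monotone_of_hasDerivAt_nonneg
      (f' := fun s => (1 - ε) * (1 / (T s * (1 - T s))) + -(1 / T (1 - s)))
    · intro s
      exact ((hG s).const_mul (1 - ε)).add (hK s)
    · intro s
      have h1 := hTpos s; have h2 := hT1 s; have h3 := hTub s
      simp only [hTcomp s, Pi.zero_apply]
      rw [show (1 - ε) * (1 / (T s * (1 - T s))) + -(1 / (1 - T s))
          = ((1 - ε) - T s) / (T s * (1 - T s)) by field_simp; ring]
      exact div_nonneg (by linarith) (mul_pos h1 h2).le
  have hN1 : ε * ((H' b - H' (1 - b)) - (H' a - H' (1 - a))) ≤ -(H' (1 - b) - H' (1 - a)) := by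
    have := hF1 hlt.le
    simp only at this
    linarith
  have hN2 : -(H' (1 - b) - H' (1 - a)) ≤ (1 - ε) * ((H' b - H' (1 - b)) - (H' a - H' (1 - a))) := by
    have := hF2 hlt.le
    simp only at this
    linarith
  refine ⟨hD.ne', ?_, ?_⟩
  · rw [← neg_div, le_div_iff₀ hD]; linarith
  · rw [← neg_div, div_le_iff₀ hD]; linarith

theorem ThG_bounds (ε : ℝ) (hε0 : 0 < ε) (hε1 : ε < 1/2)
    (H' : ℝ → ℝ)
    (hH' : ∀ s : ℝ, HasDerivAt H' (1 / min (max s ε) (1 - ε)) s)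
    (a b : ℝ) (hab : a ≠ b) :
    letI G' : ℝ → ℝ := fun s => H' s - H' (1 - s)
    G' b - G' a ≠ 0 ∧
      ε ≤ -((H' (1 - b) - H' (1 - a)) / (G' b - G' a)) ∧
      -((H' (1 - b) - H' (1 - a)) / (G' b - G' a)) ≤ 1 - ε := by
  rcases hab.lt_or_gt with h | h
  · exact aux_main ε hε0 hε1 H' hH' a b h
  · obtain ⟨hne, h1, h2⟩ := aux_main ε hε0 hε1 H' hH' b a h
    have hrw : -((H' (1 - b) - H' (1 - a)) / ((H' b - H' (1-b)) - (H' a - H' (1-a))))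
        = -((H' (1 - a) - H' (1 - b)) / ((H' a - H' (1-a)) - (H' b - H' (1-b)))) := by
      rw [← neg_div_neg_eq]; ring_nf
    refine ⟨fun hc => hne ?_, ?_, ?_⟩
    · simp only at hc ⊢; linarith
    · simp only; rw [hrw]; exact h1
    · simp only; rw [hrw]; exact h2
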